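/- Let (μ_n) be positive reals, β > 1, M, K₀, K₂ > 0 constants, and suppose the bi-orthogonal functions satisfy ‖φ_n‖_{L²[0,T]} ≤ √(μ_n/2)·κ·exp(K₀ M^{-1/β} μ_n^{1/β}(log μ_n + K₂)) for some κ > 0. If moments m_n = e^{-μ_n τ}·f_n/c_n with τ > 0, |c_n| ≥ C e^{-p n^α} (C > 0, p ≥ 0, 0 ≤ α < β), μ_n = M n^β(1 + o(1)), and ∑|f_n|² < ∞, then ∑_n |m_n|·‖φ_n‖_{L²[0,T]} < ∞. -/

import Mathlib

open MeasureTheory Filter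

private lemma aux_tendsto_atBot (β : ℝ) (hβ : 1 < β) (c₀ c₁ c₂ c₃ p α d : ℝ)
    (hαβ : α < β) (hd : d < 0) :
    Tendsto (fun x : ℝ => c₀ + c₁ * Real.log x + c₂ * (x * Real.log x) + c₃ * x
      + p * x ^ α + d * x ^ β) atTop atBot := by
  have hβ0 : (0:ℝ) < β := by linarith
  have h1 : Tendsto (fun x : ℝ => x ^ β) atTop atTop := tendsto_rpow_atTop hβ0
  have l0 : Tendsto (fun x : ℝ => x ^ (-β)) atTop (nhds 0) := tendsto_rpow_neg_atTop hβ0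
  have l1 : Tendsto (fun x : ℝ => Real.log x / x ^ β) atTop (nhds 0) :=
    (isLittleO_log_rpow_atTop hβ0).tendsto_div_nhds_zero
  have l2 : Tendsto (fun x : ℝ => Real.log x / x ^ (β - 1)) atTop (nhds 0) :=
    (isLittleO_log_rpow_atTop (by linarith : (0:ℝ) < β - 1)).tendsto_div_nhds_zero
  have l3 : Tendsto (fun x : ℝ => x ^ (1 - β)) atTop (nhds 0) := by
    have := tendsto_rpow_neg_atTop (show (0:ℝ) < β - 1 by linarith)
    simpa [neg_sub] using this
  have l4 : Tendsto (fun x : ℝ => x ^ (α - β)) atTop (nhds 0) := by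
    have := tendsto_rpow_neg_atTop (show (0:ℝ) < β - α by linarith)
    simpa [neg_sub] using this
  have hg : Tendsto (fun x : ℝ => c₀ * x ^ (-β) + c₁ * (Real.log x / x ^ β)
      + c₂ * (Real.log x / x ^ (β - 1)) + c₃ * x ^ (1 - β) + p * x ^ (α - β) + d)
      atTop (nhds d) := by
    have := ((((((l0.const_mul c₀).add (l1.const_mul c₁)).add (l2.const_mul c₂)).add
      (l3.const_mul c₃)).add (l4.const_mul p)).add
      (tendsto_const_nhds : Tendsto (fun _ : ℝ => d) atTop (nhds d)))
    simpa using this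
  have hmain := Tendsto.atTop_mul_neg hd h1 hg
  apply hmain.congr'
  filter_upwards [eventually_gt_atTop (0:ℝ)] with x hx
  have hxβ : (0:ℝ) < x ^ β := Real.rpow_pos_of_pos hx β
  have e1 : x ^ β * x ^ (-β) = 1 := by
    rw [← Real.rpow_add hx]; simp
  have e2 : x ^ β * x ^ (1 - β) = x := by
    rw [← Real.rpow_add hx]; norm_num
  have e3 : x ^ β * x ^ (α - β) = x ^ α := by
    rw [← Real.rpow_add hx]; ring_nf
  have e4 : x ^ β * (Real.log x / x ^ β) = Real.log x := by
    field_simp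
  have e5 : x ^ β * (Real.log x / x ^ (β - 1)) = x * Real.log x := by
    have hb1 : (0:ℝ) < x ^ (β - 1) := Real.rpow_pos_of_pos hx _
    have hxx : x * x ^ (β - 1) = x ^ β := by
      nth_rewrite 1 [← Real.rpow_one x]
      rw [← Real.rpow_add hx]; norm_num
    rw [div_eq_inv_mul, ← mul_assoc, mul_comm, ← mul_assoc]
    rw [← hxx]
    field_simp
  calc x ^ β * (c₀ * x ^ (-β) + c₁ * (Real.log x / x ^ β)
      + c₂ * (Real.log x / x ^ (β - 1)) + c₃ * x ^ (1 - β) + p * x ^ (α - β) + d)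
      = c₀ * (x ^ β * x ^ (-β)) + c₁ * (x ^ β * (Real.log x / x ^ β))
        + c₂ * (x ^ β * (Real.log x / x ^ (β - 1))) + c₃ * (x ^ β * x ^ (1 - β))
        + p * (x ^ β * x ^ (α - β)) + d * x ^ β := by ring
    _ = c₀ + c₁ * Real.log x + c₂ * (x * Real.log x) + c₃ * x + p * x ^ α + d * x ^ β := by
        rw [e1, e2, e3, e4, e5]; ring

set_option maxHeartbeats 1000000 in
theorem absolute_convergence_of_moment_series
    (T : ℝ) (hT : 0 < T)
    (μ : ℕ → ℝ) (M β : ℝ) (hM : 0 < M) (hβ : 1 < β)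
    (hpos : ∀ n : ℕ, 1 ≤ n → 0 < μ n)
    (hasymp : Tendsto (fun n : ℕ => μ n / (M * (n : ℝ) ^ β)) atTop (nhds 1))
    (K₀ K₂ κ : ℝ) (hK₀ : 0 < K₀) (hK₂ : 0 < K₂) (hκ : 0 < κ)
    (φ : ℕ → Lp ℝ 2 (volume.restrict (Set.Icc (0 : ℝ) T)))
    (hnorm : ∀ n : ℕ, 1 ≤ n → ‖φ n‖ ≤ Real.sqrt (μ n / 2) * κ *
      Real.exp (K₀ * M ^ (-(1 / β)) * (μ n) ^ (1 / β) * (Real.log (μ n) + K₂)))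
    (τ : ℝ) (hτ : 0 < τ)
    (f c m : ℕ → ℝ) (C p α : ℝ) (hC : 0 < C) (hp : 0 ≤ p) (hα : 0 ≤ α) (hαβ : α < β)
    (hc : ∀ n : ℕ, 1 ≤ n → C * Real.exp (-p * (n : ℝ) ^ α) ≤ |c n|)
    (hm : ∀ n : ℕ, 1 ≤ n → m n = Real.exp (-(μ n) * τ) * f n / c n)
    (hf : Summable fun n : ℕ => |f (n + 1)| ^ 2) :
    Summable fun n : ℕ => |m (n + 1)| * ‖φ (n + 1)‖ := by
  have hβ0 : (0:ℝ) < β := by linarith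
  set A : ℝ := K₀ * M ^ (-(1 / β)) with hA
  have hA0 : 0 < A := mul_pos hK₀ (Real.rpow_pos_of_pos hM _)
  set t2 : ℝ := (2 * M) ^ (1 / β) with ht2
  have h2M : (0:ℝ) < 2 * M := by linarith
  have ht20 : 0 < t2 := Real.rpow_pos_of_pos h2M _
  set g : ℕ → ℝ := fun n => Real.exp (-(μ n) * τ) * ‖φ n‖ / |c n| with hgdef
  -- the exponent bound function
  set E : ℕ → ℝ := fun n => (1/2) * Real.log (2 * M * (n:ℝ) ^ β)
      + A * ((2 * M * (n:ℝ) ^ β) ^ (1/β)) * (Real.log (2 * M * (n:ℝ) ^ β) + K₂)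
      + p * (n:ℝ) ^ α - (M * τ / 2) * (n:ℝ) ^ β with hEdef
  -- Step 1: eventual bounds on μ
  have hratio : ∀ᶠ n : ℕ in atTop, μ n / (M * (n:ℝ) ^ β) ∈ Set.Ioo (1/2 : ℝ) 2 :=
    hasymp.eventually (Ioo_mem_nhds (by norm_num) (by norm_num))
  have hMnb : Tendsto (fun n : ℕ => M * (n:ℝ) ^ β) atTop atTop :=
    ((tendsto_rpow_atTop hβ0).comp tendsto_natCast_atTop_atTop).const_mul_atTop hM
  have hbig : ∀ᶠ n : ℕ in atTop, (2:ℝ) ≤ M * (n:ℝ) ^ β := hMnb.eventually_ge_atTop 2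
  -- Step 2: eventually g n ≤ exp (E n + log (κ / C))
  have hgE : ∀ᶠ n : ℕ in atTop, g n ≤ Real.exp (E n + Real.log (κ / C)) := by
    filter_upwards [hratio, hbig, eventually_ge_atTop 1] with n hr hb hn1
    have hn0 : (0:ℝ) < (n:ℝ) := by exact_mod_cast hn1
    have hnb0 : (0:ℝ) < (n:ℝ) ^ β := Real.rpow_pos_of_pos hn0 β
    have hMnb0 : (0:ℝ) < M * (n:ℝ) ^ β := by positivity
    have hX0 : (0:ℝ) < 2 * M * (n:ℝ) ^ β := by positivity
    set X : ℝ := 2 * M * (n:ℝ) ^ β with hXdef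
    have hμpos : 0 < μ n := hpos n hn1
    have hμup : μ n ≤ X := by
      have h := (div_lt_iff₀ hMnb0).1 hr.2
      rw [hXdef]; nlinarith
    have hμlo : (M / 2) * (n:ℝ) ^ β ≤ μ n := by
      have h := (lt_div_iff₀ hMnb0).1 hr.1
      nlinarith
    have hμ1 : (1:ℝ) ≤ μ n := by nlinarith
    have hcpos : (0:ℝ) < C * Real.exp (-p * (n:ℝ) ^ α) := by positivity
    have hcn : C * Real.exp (-p * (n:ℝ) ^ α) ≤ |c n| := hc n hn1
    -- bound the numerator
    have hφ := hnorm n hn1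
    have hφ0 : (0:ℝ) ≤ ‖φ n‖ := norm_nonneg _
    have hnum : Real.exp (-(μ n) * τ) * ‖φ n‖ ≤
        Real.exp (-(μ n) * τ) * (Real.sqrt (μ n / 2) * κ *
          Real.exp (A * (μ n) ^ (1/β) * (Real.log (μ n) + K₂))) :=
      mul_le_mul_of_nonneg_left hφ (Real.exp_nonneg _)
    have hgle : g n ≤ Real.exp (-(μ n) * τ) * (Real.sqrt (μ n / 2) * κ *
        Real.exp (A * (μ n) ^ (1/β) * (Real.log (μ n) + K₂)))
        / (C * Real.exp (-p * (n:ℝ) ^ α)) := by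
      apply div_le_div₀ (by positivity) hnum hcpos hcn
    -- now bound the RHS by exp (E n + log (κ/C))
    have hsqrt : Real.sqrt (μ n / 2) ≤ Real.exp (Real.log X * (1/2)) := by
      have h1 : Real.sqrt (μ n / 2) ≤ Real.sqrt X := Real.sqrt_le_sqrt (by linarith)
      have h2 : Real.sqrt X = Real.exp (Real.log X * (1/2)) := by
        rw [Real.sqrt_eq_rpow, Real.rpow_def_of_pos hX0]
      linarith [h1, h2.le, h2.ge]
    have hexpo : A * (μ n) ^ (1/β) * (Real.log (μ n) + K₂) ≤
        A * X ^ (1/β) * (Real.log X + K₂) := by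
      have hμX : (μ n) ^ (1/β) ≤ X ^ (1/β) :=
        Real.rpow_le_rpow (le_of_lt hμpos) hμup (by positivity)
      have hlog : Real.log (μ n) ≤ Real.log X := Real.log_le_log hμpos hμup
      have hlogpos : 0 ≤ Real.log (μ n) + K₂ := by
        have := Real.log_nonneg hμ1; linarith
      have h1 : (0:ℝ) ≤ (μ n) ^ (1/β) := Real.rpow_nonneg (le_of_lt hμpos) _
      apply mul_le_mul
      · exact mul_le_mul_of_nonneg_left hμX (le_of_lt hA0)
      · linarith
      · exact hlogpos
      · positivity
    have hτb : -(μ n) * τ ≤ -(M * τ / 2) * (n:ℝ) ^ β := by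
      have h1 : (M/2) * (n:ℝ)^β * τ ≤ μ n * τ := mul_le_mul_of_nonneg_right hμlo hτ.le
      have h2 : -(M * τ / 2) * (n:ℝ)^β = -((M/2) * (n:ℝ)^β * τ) := by ring
      rw [h2]; linarith
    -- combine
    calc g n ≤ Real.exp (-(μ n) * τ) * (Real.sqrt (μ n / 2) * κ *
          Real.exp (A * (μ n) ^ (1/β) * (Real.log (μ n) + K₂)))
          / (C * Real.exp (-p * (n:ℝ) ^ α)) := hgle
      _ = Real.sqrt (μ n / 2) * (κ / C) *
          Real.exp (-(μ n) * τ + A * (μ n) ^ (1/β) * (Real.log (μ n) + K₂)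
            + p * (n:ℝ) ^ α) := by
          have hinv : (C * Real.exp (-p * (n:ℝ) ^ α))⁻¹
              = C⁻¹ * Real.exp (p * (n:ℝ) ^ α) := by
            rw [mul_inv, show -p * (n:ℝ) ^ α = -(p * (n:ℝ) ^ α) by ring,
              Real.exp_neg, inv_inv]
          rw [div_eq_mul_inv, hinv, Real.exp_add, Real.exp_add]
          ring
      _ ≤ Real.exp (Real.log X * (1/2)) * (κ / C) *
          Real.exp (-(M * τ / 2) * (n:ℝ) ^ β + A * X ^ (1/β) * (Real.log X + K₂)
            + p * (n:ℝ) ^ α) := by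
          apply mul_le_mul
          · exact mul_le_mul_of_nonneg_right hsqrt (by positivity)
          · apply Real.exp_le_exp.2; linarith
          · positivity
          · positivity
      _ = Real.exp (E n + Real.log (κ / C)) := by
          have hEn : Real.exp (Real.log X * (1/2)) *
              Real.exp (-(M * τ / 2) * (n:ℝ) ^ β + A * X ^ (1/β) * (Real.log X + K₂)
                + p * (n:ℝ) ^ α) = Real.exp (E n) := by
            rw [← Real.exp_add]
            congr 1
            simp only [hEdef, hXdef]
            ring
          rw [Real.exp_add (E n) (Real.log (κ / C)),
            Real.exp_log (show (0:ℝ) < κ / C by positivity), ← hEn]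
          ring
  -- Step 3: eventually E n + log (κ/C) ≤ -n
  have hEsmall : ∀ᶠ n : ℕ in atTop, E n + Real.log (κ / C) ≤ -(n:ℝ) := by
    have hd : -(M * τ / 2) < 0 := by nlinarith
    have haux := aux_tendsto_atBot β hβ
      (Real.log (κ / C) + (1/2) * Real.log (2 * M))
      (β / 2) (A * t2 * β) (A * t2 * (Real.log (2 * M) + K₂) + 1) p α
      (-(M * τ / 2)) hαβ hd
    have hcomp := haux.comp tendsto_natCast_atTop_atTop
    have hev := hcomp.eventually (eventually_le_atBot (0:ℝ))
    filter_upwards [hev, eventually_ge_atTop 1] with n hn hn1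
    have hn0 : (0:ℝ) < (n:ℝ) := by exact_mod_cast hn1
    have hnb0 : (0:ℝ) < (n:ℝ) ^ β := Real.rpow_pos_of_pos hn0 β
    have hlogX : Real.log (2 * M * (n:ℝ) ^ β) = Real.log (2 * M) + β * Real.log n := by
      rw [Real.log_mul (by positivity) (by positivity), Real.log_rpow hn0]
    have hXpow : (2 * M * (n:ℝ) ^ β) ^ (1/β) = t2 * (n:ℝ) := by
      rw [Real.mul_rpow (by positivity) (by positivity), ht2]
      congr 1
      rw [← Real.rpow_mul hn0.le, mul_one_div, div_self (ne_of_gt hβ0), Real.rpow_one]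
    have : E n + Real.log (κ / C) + (n:ℝ) ≤ 0 := by
      have heq : E n + Real.log (κ / C) + (n:ℝ) =
          (Real.log (κ / C) + (1/2) * Real.log (2 * M))
          + (β / 2) * Real.log (n:ℝ)
          + (A * t2 * β) * ((n:ℝ) * Real.log (n:ℝ))
          + (A * t2 * (Real.log (2 * M) + K₂) + 1) * (n:ℝ)
          + p * (n:ℝ) ^ α + (-(M * τ / 2)) * (n:ℝ) ^ β := by
        simp only [hEdef, hlogX, hXpow]
        ring
      rw [heq]
      exact hn
    linarith
  -- Step 4: eventually g n ≤ exp (-n)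
  have hgsmall : ∀ᶠ n : ℕ in atTop, g n ≤ Real.exp (-(n:ℝ)) := by
    filter_upwards [hgE, hEsmall] with n h1 h2
    exact h1.trans (Real.exp_le_exp.2 h2)
  -- Step 5: assemble the comparison
  have hgnonneg : ∀ n : ℕ, 0 ≤ g n := fun n => by
    rw [hgdef]; positivity
  have hshift : ∀ᶠ k : ℕ in atTop, g (k + 1) ≤ Real.exp (-((k:ℝ) + 1)) := by
    have := (tendsto_add_atTop_nat 1).eventually hgsmall
    filter_upwards [this] with k hk
    convert hk using 3
    push_cast
    ring
  have hterm : ∀ᶠ k : ℕ in atTop, |m (k + 1)| * ‖φ (k + 1)‖ ≤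
      (|f (k + 1)| ^ 2 + Real.exp (-(k:ℝ))) / 2 := by
    filter_upwards [hshift] with k hk
    have hk1 : 1 ≤ k + 1 := Nat.le_add_left 1 k
    have hcpos : (0:ℝ) < C * Real.exp (-p * ((k+1:ℕ):ℝ) ^ α) := by positivity
    have habs : 0 < |c (k + 1)| := lt_of_lt_of_le hcpos (hc (k+1) hk1)
    have hcne : c (k + 1) ≠ 0 := fun h => by simp [h] at habs
    have hmeq : |m (k + 1)| * ‖φ (k + 1)‖ = |f (k + 1)| * g (k + 1) := by
      rw [hm (k+1) hk1, hgdef]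
      rw [abs_div, abs_mul, abs_of_pos (Real.exp_pos _)]
      field_simp
    rw [hmeq]
    have hg0 := hgnonneg (k + 1)
    have hgsq : g (k + 1) ^ 2 ≤ Real.exp (-(k:ℝ)) := by
      have h1 : g (k + 1) ^ 2 ≤ Real.exp (-((k:ℝ) + 1)) ^ 2 := by
        apply pow_le_pow_left₀ hg0 hk
      have h2 : Real.exp (-((k:ℝ) + 1)) ^ 2 ≤ Real.exp (-(k:ℝ)) := by
        rw [sq, ← Real.exp_add]
        apply Real.exp_le_exp.2
        have : (0:ℝ) ≤ (k:ℝ) := Nat.cast_nonneg k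
        linarith
      exact h1.trans h2
    have hamgm : 2 * (|f (k + 1)| * g (k + 1)) ≤ |f (k + 1)| ^ 2 + g (k + 1) ^ 2 := by
      nlinarith [sq_nonneg (|f (k + 1)| - g (k + 1))]
    nlinarith
  -- Step 6: conclude by comparison
  have hexpsum : Summable (fun k : ℕ => Real.exp (-(k:ℝ))) := by
    have : (fun k : ℕ => Real.exp (-(k:ℝ))) = fun k : ℕ => (Real.exp (-1)) ^ k := by
      funext k
      rw [← Real.exp_nat_mul]
      congr 1
      ring
    rw [this]
    exact summable_geometric_of_lt_one (Real.exp_nonneg _)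
      (Real.exp_lt_one_iff.2 (by norm_num))
  have hDsum : Summable (fun k : ℕ => (|f (k + 1)| ^ 2 + Real.exp (-(k:ℝ))) / 2) :=
    (hf.add hexpsum).div_const 2
  obtain ⟨N, hN⟩ := eventually_atTop.1 hterm
  apply (summable_nat_add_iff N).mp
  apply Summable.of_nonneg_of_le (fun k => by positivity)
    (fun k => hN (k + N) (Nat.le_add_left N k))
  exact (summable_nat_add_iff N).mpr hDsum
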